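/- Let T = H^{-1/2} S H^{1/2} with H symmetric positive definite and S symmetric. Define the offline Anderson extrapolate x_e^{(k)} = ∑_{i=1}^k c*_i x^{(i-1)} where c* minimizes ‖∑_{i=1}^k c_i (x^{(i)} - x^{(i-1)})‖ over c ∈ ℝ^k with ∑ c_i = 1. Then ‖(T - Id)(x_e^{(k)} - x*)‖ ≤ √κ(H) · min_{P ∈ 𝒫_{k-1}, P(1)=1} ‖P(S)‖ · ‖(T - Id)(x^{(0)} - x*)‖, where 𝒫_{k-1} is the set of polynomials of degree at most k-1. -/

import Mathlib

noncomputable def eNorm {p : ℕ} (v : Fin p → ℝ) : ℝ := Real.sqrt (∑ i, v i ^ 2)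

noncomputable def opNorm {p : ℕ} (M : Matrix (Fin p) (Fin p) ℝ) : ℝ :=
  ‖Matrix.toEuclideanCLM (𝕜 := ℝ) M‖

/-- `Matrix.PosSemidef.sqrt` was removed from Mathlib; restated with its old (Dec 2024) definition. -/
noncomputable def Matrix.PosSemidef.sqrt {n : Type*} [Fintype n] [DecidableEq n] {𝕜 : Type*} [RCLike 𝕜]
    [PartialOrder 𝕜] [StarOrderedRing 𝕜]
    {A : Matrix n n 𝕜} (hA : A.PosSemidef) : Matrix n n 𝕜 :=
  (hA.1.eigenvectorUnitary : Matrix n n 𝕜) * Matrix.diagonal ((↑) ∘ (Real.sqrt ·) ∘ hA.1.eigenvalues) *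
    (star hA.1.eigenvectorUnitary : Matrix n n 𝕜)

noncomputable def condNum {p : ℕ} {H : Matrix (Fin p) (Fin p) ℝ} (hH : H.IsHermitian) : ℝ :=
  (⨆ i, hH.eigenvalues i) / (⨅ i, hH.eigenvalues i)

namespace AndersonAux

open Matrix Polynomial

lemma eNorm_nonneg {p : ℕ} (v : Fin p → ℝ) : 0 ≤ eNorm v := Real.sqrt_nonneg _

lemma eNorm_sq {p : ℕ} (v : Fin p → ℝ) : eNorm v ^ 2 = v ⬝ᵥ v := by
  rw [eNorm, Real.sq_sqrt (by positivity)]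
  simp [dotProduct, sq]

lemma le_of_sq_le_sq {a b : ℝ} (ha : 0 ≤ a) (hb : 0 ≤ b) (h : a ^ 2 ≤ b ^ 2) : a ≤ b := by
  nlinarith

lemma eNorm_eq_norm {p : ℕ} (v : Fin p → ℝ) :
    eNorm v = ‖(WithLp.equiv 2 (Fin p → ℝ)).symm v‖ := by
  rw [EuclideanSpace.norm_eq]
  simp [eNorm, Real.norm_eq_abs, sq_abs]

lemma eNorm_mulVec_le {p : ℕ} (M : Matrix (Fin p) (Fin p) ℝ) (v : Fin p → ℝ) :
    eNorm (M *ᵥ v) ≤ opNorm M * eNorm v := by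
  rw [eNorm_eq_norm, eNorm_eq_norm]
  calc ‖(WithLp.equiv 2 (Fin p → ℝ)).symm (M *ᵥ v)‖
      = ‖Matrix.toEuclideanCLM (𝕜 := ℝ) M ((WithLp.equiv 2 (Fin p → ℝ)).symm v)‖ := by
        rfl
    _ ≤ opNorm M * ‖(WithLp.equiv 2 (Fin p → ℝ)).symm v‖ := ContinuousLinearMap.le_opNorm _ _

lemma sum_mulVec {p : ℕ} {ι : Type*} (s : Finset ι) (M : ι → Matrix (Fin p) (Fin p) ℝ)
    (w : Fin p → ℝ) : (∑ i ∈ s, M i) *ᵥ w = ∑ i ∈ s, (M i) *ᵥ w := by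
  ext j
  simp only [Matrix.mulVec, dotProduct, Finset.sum_apply, Matrix.sum_apply,
    Finset.sum_mul]
  rw [Finset.sum_comm]

lemma mulVec_sum {p : ℕ} {ι : Type*} (s : Finset ι) (M : Matrix (Fin p) (Fin p) ℝ)
    (v : ι → Fin p → ℝ) : M *ᵥ (∑ i ∈ s, v i) = ∑ i ∈ s, M *ᵥ (v i) := by
  ext j
  simp only [Matrix.mulVec, dotProduct, Finset.sum_apply, Finset.mul_sum]
  rw [Finset.sum_comm]

lemma opNorm_nonneg {p : ℕ} (M : Matrix (Fin p) (Fin p) ℝ) : 0 ≤ opNorm M :=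
  norm_nonneg _

lemma conj_quad {p : ℕ} (U : Matrix (Fin p) (Fin p) ℝ) (d : Fin p → ℝ) (v : Fin p → ℝ) :
    v ⬝ᵥ (U * Matrix.diagonal d * star U) *ᵥ v = ∑ i, d i * ((star U *ᵥ v) i) ^ 2 := by
  have hvU : v ᵥ* U = star U *ᵥ v := by
    rw [Matrix.star_eq_conjTranspose, Matrix.conjTranspose_eq_transpose_of_trivial,
      Matrix.mulVec_transpose]
  rw [← Matrix.mulVec_mulVec, ← Matrix.mulVec_mulVec, Matrix.dotProduct_mulVec, hvU]
  simp only [dotProduct, Matrix.mulVec_diagonal]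
  exact Finset.sum_congr rfl fun i _ => by ring

lemma herm_quad {p : ℕ} {A : Matrix (Fin p) (Fin p) ℝ} (hA : A.IsHermitian) (v : Fin p → ℝ) :
    v ⬝ᵥ A *ᵥ v = ∑ i, hA.eigenvalues i * ((star (hA.eigenvectorUnitary : Matrix (Fin p) (Fin p) ℝ) *ᵥ v) i) ^ 2 := by
  conv_lhs => rw [hA.spectral_theorem, Unitary.conjStarAlgAut_apply]
  have : Matrix.diagonal (RCLike.ofReal ∘ hA.eigenvalues) = Matrix.diagonal hA.eigenvalues := rfl
  rw [this, conj_quad]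

lemma norm_quad {p : ℕ} {A : Matrix (Fin p) (Fin p) ℝ} (hA : A.IsHermitian) (v : Fin p → ℝ) :
    v ⬝ᵥ v = ∑ i, ((star (hA.eigenvectorUnitary : Matrix (Fin p) (Fin p) ℝ) *ᵥ v) i) ^ 2 := by
  have hU : (hA.eigenvectorUnitary : Matrix (Fin p) (Fin p) ℝ) *
      star (hA.eigenvectorUnitary : Matrix (Fin p) (Fin p) ℝ) = 1 :=
    Matrix.mem_unitaryGroup_iff.mp hA.eigenvectorUnitary.2
  have := conj_quad (hA.eigenvectorUnitary : Matrix (Fin p) (Fin p) ℝ) (fun _ => (1 : ℝ)) v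
  rw [Matrix.diagonal_one, mul_one, hU, Matrix.one_mulVec] at this
  simpa using this

lemma quad_le {p : ℕ} [Nonempty (Fin p)] {A : Matrix (Fin p) (Fin p) ℝ}
    (hA : A.IsHermitian) (v : Fin p → ℝ) :
    v ⬝ᵥ A *ᵥ v ≤ (⨆ i, hA.eigenvalues i) * (v ⬝ᵥ v) := by
  rw [herm_quad hA v, norm_quad hA v, Finset.mul_sum]
  refine Finset.sum_le_sum fun i _ => ?_
  exact mul_le_mul_of_nonneg_right
    (le_ciSup (Set.Finite.bddAbove (Set.finite_range _)) i) (sq_nonneg _)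

lemma quad_ge {p : ℕ} [Nonempty (Fin p)] {A : Matrix (Fin p) (Fin p) ℝ}
    (hA : A.IsHermitian) (v : Fin p → ℝ) :
    (⨅ i, hA.eigenvalues i) * (v ⬝ᵥ v) ≤ v ⬝ᵥ A *ᵥ v := by
  rw [herm_quad hA v, norm_quad hA v, Finset.mul_sum]
  refine Finset.sum_le_sum fun i _ => ?_
  exact mul_le_mul_of_nonneg_right
    (ciInf_le (Set.Finite.bddBelow (Set.finite_range _)) i) (sq_nonneg _)

lemma aeval_conj {p : ℕ} (Q R S : Matrix (Fin p) (Fin p) ℝ)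
    (h1 : Q * R = 1) (h2 : R * Q = 1) (P : Polynomial ℝ) :
    Polynomial.aeval (Q * S * R) P = Q * Polynomial.aeval S P * R := by
  have hpow : ∀ n : ℕ, (Q * S * R) ^ n = Q * S ^ n * R := by
    intro n
    induction n with
    | zero => simp [h1]
    | succ n ih =>
        rw [pow_succ, ih, pow_succ]
        calc Q * S ^ n * R * (Q * S * R) = Q * S ^ n * (R * Q) * (S * R) := by
              noncomm_ring
          _ = Q * (S ^ n * S) * R := by rw [h2, mul_one]; noncomm_ring
  induction P using Polynomial.induction_on' with
  | add f g hf hg => simp [map_add, hf, hg, Matrix.mul_add, Matrix.add_mul]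
  | monomial n a =>
      simp only [Polynomial.aeval_monomial, hpow, Algebra.algebraMap_eq_smul_one,
        smul_mul_assoc, one_mul, mul_smul_comm]

lemma sqrt_isHermitian' {p : ℕ} {A : Matrix (Fin p) (Fin p) ℝ} (hA : A.PosSemidef) :
    hA.sqrt.IsHermitian := by
  unfold Matrix.PosSemidef.sqrt
  simp [Matrix.IsHermitian, Matrix.conjTranspose_mul, Matrix.mul_assoc, Matrix.diagonal_conjTranspose,
    Matrix.star_eq_conjTranspose]

lemma sqrt_mul_self' {p : ℕ} {A : Matrix (Fin p) (Fin p) ℝ} (hA : A.PosSemidef) :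
    hA.sqrt * hA.sqrt = A := by
  unfold Matrix.PosSemidef.sqrt
  have h1 : star (hA.1.eigenvectorUnitary : Matrix (Fin p) (Fin p) ℝ) *
      (hA.1.eigenvectorUnitary : Matrix (Fin p) (Fin p) ℝ) = 1 :=
    Unitary.star_mul_self_of_mem hA.1.eigenvectorUnitary.2
  simp only [Matrix.mul_assoc]
  rw [← Matrix.mul_assoc (star _) _ (Matrix.diagonal _ * _), h1, Matrix.one_mul,
    ← Matrix.mul_assoc (Matrix.diagonal _) (Matrix.diagonal _), Matrix.diagonal_mul_diagonal]
  conv_rhs => rw [hA.1.spectral_theorem, Unitary.conjStarAlgAut_apply]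
  rw [Matrix.mul_assoc]
  congr 3
  ext i
  simp [Real.mul_self_sqrt (hA.eigenvalues_nonneg i)]

end AndersonAux

open AndersonAux Matrix Polynomial in
/-- Bound for the offline Anderson extrapolate: for `T = H^{-1/2} S H^{1/2}` and `c*` the
Anderson coefficients (minimizing the norm of the combined residual among coefficients summing
to one), the extrapolation error is bounded using any polynomial `P` of degree at most `k - 1`
with `P(1) = 1`; taking the minimum over such `P` gives the stated bound. -/
theorem stmt_6 {p k : ℕ} (hk : 1 ≤ k) (H S : Matrix (Fin p) (Fin p) ℝ)
    (hH : H.PosDef) (hS : S.IsHermitian)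
    (T : Matrix (Fin p) (Fin p) ℝ)
    (hT : T = (hH.posSemidef.sqrt)⁻¹ * S * hH.posSemidef.sqrt)
    (b xstar : Fin p → ℝ) (hfix : T.mulVec xstar + b = xstar)
    (x : ℕ → Fin p → ℝ) (hx : ∀ m, x (m + 1) = T.mulVec (x m) + b)
    (cstar : Fin k → ℝ) (hcsum : ∑ i, cstar i = 1)
    (hmin : ∀ c : Fin k → ℝ, ∑ i, c i = 1 →
      eNorm (∑ i : Fin k, cstar i • (x ((i : ℕ) + 1) - x i)) ≤
        eNorm (∑ i : Fin k, c i • (x ((i : ℕ) + 1) - x i))) :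
    ∀ P : Polynomial ℝ, P.natDegree ≤ k - 1 → P.eval 1 = 1 →
      eNorm ((T - 1).mulVec ((∑ i : Fin k, cstar i • x i) - xstar)) ≤
        Real.sqrt (condNum hH.isHermitian) * opNorm (Polynomial.aeval S P) *
          eNorm ((T - 1).mulVec (x 0 - xstar)) := by
  intro P hdeg hP1
  rcases Nat.eq_zero_or_pos p with hp | hp
  · subst hp
    simp [eNorm, Finset.univ_eq_empty]
  haveI : Nonempty (Fin p) := ⟨⟨0, hp⟩⟩
  have hdeg' : P.natDegree < k := lt_of_le_of_lt hdeg (Nat.sub_lt hk one_pos)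
  set Hs := hH.posSemidef.sqrt with hHsdef
  -- invertibility of Hs
  have hHerm : Hs.IsHermitian := sqrt_isHermitian' hH.posSemidef
  have hHsq : Hs * Hs = H := sqrt_mul_self' hH.posSemidef
  have hdet : IsUnit Hs.det := by
    have hdH : 0 < H.det := hH.det_pos
    rw [← hHsq, Matrix.det_mul] at hdH
    exact isUnit_iff_ne_zero.mpr (by nlinarith)
  have hinv1 : Hs⁻¹ * Hs = 1 := Matrix.nonsing_inv_mul _ hdet
  have hinv2 : Hs * Hs⁻¹ = 1 := Matrix.mul_nonsing_inv _ hdet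
  -- iterate differences
  set e0 := x 0 - xstar with he0
  have hdiffm : ∀ m, x m - xstar = (T ^ m) *ᵥ e0 := by
    intro m
    induction m with
    | zero => simp [he0]
    | succ m ih =>
        have : x (m + 1) - xstar = T *ᵥ (x m - xstar) := by
          have hb : b = xstar - T *ᵥ xstar := eq_sub_of_add_eq (by rw [add_comm]; exact hfix)
          rw [hx m, hb, Matrix.mulVec_sub]
          abel
        rw [this, ih, Matrix.mulVec_mulVec, ← pow_succ']
  have hstep : ∀ i : ℕ, x (i + 1) - x i = ((T - 1) * T ^ i) *ᵥ e0 := by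
    intro i
    have h : x (i + 1) - x i = (x (i + 1) - xstar) - (x i - xstar) := by abel
    rw [h, hdiffm, hdiffm, ← Matrix.sub_mulVec, Matrix.sub_mul, one_mul, ← pow_succ']
  set w := (T - 1) *ᵥ e0 with hw
  have hcomb : ∀ c : Fin k → ℝ, ∑ i, c i = 1 →
      (T - 1) *ᵥ ((∑ i : Fin k, c i • x i) - xstar) = ∑ i : Fin k, c i • (x ((i : ℕ) + 1) - x i) := by
    intro c hc
    have h1 : (∑ i : Fin k, c i • x i) - xstar = ∑ i : Fin k, c i • (x i - xstar) := by
      simp only [smul_sub, Finset.sum_sub_distrib, ← Finset.sum_smul, hc, one_smul]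
    rw [h1, mulVec_sum]
    refine Finset.sum_congr rfl fun i _ => ?_
    rw [Matrix.mulVec_smul, hstep, hdiffm, Matrix.mulVec_mulVec]
  -- coefficients of P
  set c : Fin k → ℝ := fun i => P.coeff i with hc
  have hc1 : ∑ i, c i = 1 := by
    have := Polynomial.eval_eq_sum_range' hdeg' (1 : ℝ)
    rw [hP1] at this
    rw [hc, Fin.sum_univ_eq_sum_range (fun i => P.coeff i) k]
    simpa using this.symm
  have hsum2 : ∑ i : Fin k, c i • (x ((i : ℕ) + 1) - x i) = (Polynomial.aeval T P) *ᵥ w := by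
    have hcomm : ∀ i : ℕ, (T - 1) * T ^ i = T ^ i * (T - 1) :=
      fun i => (((Commute.refl T).sub_left (Commute.one_left T)).pow_right i).eq
    have h1 : ∀ i : ℕ, x (i + 1) - x i = T ^ i *ᵥ w := by
      intro i
      rw [hstep i, hcomm i, ← Matrix.mulVec_mulVec]
    have h2 : (Polynomial.aeval T P) = ∑ i : Fin k, c i • T ^ (i : ℕ) := by
      rw [Polynomial.aeval_eq_sum_range' hdeg' T, ← Fin.sum_univ_eq_sum_range]
    rw [h2, sum_mulVec]
    refine Finset.sum_congr rfl fun i _ => ?_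
    rw [h1, Matrix.smul_mulVec]
  -- conjugation
  have hconj : (Polynomial.aeval T P : Matrix (Fin p) (Fin p) ℝ)
      = Hs⁻¹ * (Polynomial.aeval S P) * Hs := by
    rw [hT]
    exact aeval_conj Hs⁻¹ Hs S hinv1 hinv2 P
  -- eigenvalue bounds
  set lmax := ⨆ i, hH.isHermitian.eigenvalues i with hlmax
  set lmin := ⨅ i, hH.isHermitian.eigenvalues i with hlmin
  have hminpos : 0 < lmin := by
    obtain ⟨i, hi⟩ := exists_eq_ciInf_of_finite (f := hH.isHermitian.eigenvalues)
    rw [hlmin, ← hi]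
    exact hH.eigenvalues_pos i
  have hmaxpos : 0 < lmax := by
    obtain ⟨i, hi⟩ := exists_eq_ciSup_of_finite (f := hH.isHermitian.eigenvalues)
    rw [hlmax, ← hi]
    exact hH.eigenvalues_pos i
  -- ‖Hs v‖² = v ⬝ᵥ H v
  have hHsnorm : ∀ v : Fin p → ℝ, eNorm (Hs *ᵥ v) ^ 2 = v ⬝ᵥ H *ᵥ v := by
    intro v
    rw [eNorm_sq, Matrix.dotProduct_mulVec]
    have : (Hs *ᵥ v) ᵥ* Hs = H *ᵥ v := by
      rw [← Matrix.mulVec_transpose]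
      have hTs : Hsᵀ = Hs := by
        rw [← Matrix.conjTranspose_eq_transpose_of_trivial]; exact hHerm
      rw [hTs, Matrix.mulVec_mulVec, hHsq]
    rw [this, dotProduct_comm]
  have hup : ∀ v : Fin p → ℝ, eNorm (Hs *ᵥ v) ≤ Real.sqrt lmax * eNorm v := by
    intro v
    refine le_of_sq_le_sq (eNorm_nonneg _)
      (mul_nonneg (Real.sqrt_nonneg _) (eNorm_nonneg _)) ?_
    rw [mul_pow, Real.sq_sqrt hmaxpos.le, hHsnorm, eNorm_sq]
    exact quad_le hH.isHermitian v
  have hdown : ∀ v : Fin p → ℝ, eNorm (Hs⁻¹ *ᵥ v) ≤ (Real.sqrt lmin)⁻¹ * eNorm v := by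
    intro v
    have hfix2 : Hs *ᵥ (Hs⁻¹ *ᵥ v) = v := by
      rw [Matrix.mulVec_mulVec, hinv2, Matrix.one_mulVec]
    refine le_of_sq_le_sq (eNorm_nonneg _)
      (mul_nonneg (inv_nonneg.2 (Real.sqrt_nonneg _)) (eNorm_nonneg _)) ?_
    have h1 : lmin * eNorm (Hs⁻¹ *ᵥ v) ^ 2 ≤ eNorm v ^ 2 := by
      rw [eNorm_sq, eNorm_sq]
      calc lmin * ((Hs⁻¹ *ᵥ v) ⬝ᵥ (Hs⁻¹ *ᵥ v)) ≤ (Hs⁻¹ *ᵥ v) ⬝ᵥ H *ᵥ (Hs⁻¹ *ᵥ v) :=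
            quad_ge hH.isHermitian _
        _ = eNorm (Hs *ᵥ (Hs⁻¹ *ᵥ v)) ^ 2 := (hHsnorm _).symm
        _ = v ⬝ᵥ v := by rw [hfix2, eNorm_sq]
    rw [mul_pow, ← Real.sqrt_inv, Real.sq_sqrt (inv_nonneg.2 hminpos.le)]
    calc eNorm (Hs⁻¹ *ᵥ v) ^ 2 = lmin⁻¹ * (lmin * eNorm (Hs⁻¹ *ᵥ v) ^ 2) := by
          rw [← mul_assoc, inv_mul_cancel₀ hminpos.ne', one_mul]
      _ ≤ lmin⁻¹ * eNorm v ^ 2 := mul_le_mul_of_nonneg_left h1 (inv_nonneg.2 hminpos.le)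
  -- main chain
  have key1 : eNorm ((T - 1) *ᵥ ((∑ i : Fin k, cstar i • x i) - xstar))
      ≤ eNorm ((Polynomial.aeval T P : Matrix (Fin p) (Fin p) ℝ) *ᵥ w) := by
    rw [hcomb cstar hcsum, ← hsum2]
    exact hmin c hc1
  have key2 : eNorm ((Polynomial.aeval T P : Matrix (Fin p) (Fin p) ℝ) *ᵥ w)
      ≤ (Real.sqrt lmin)⁻¹ * (opNorm (Polynomial.aeval S P) * (Real.sqrt lmax * eNorm w)) := by
    rw [hconj, ← Matrix.mulVec_mulVec, ← Matrix.mulVec_mulVec]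
    calc eNorm (Hs⁻¹ *ᵥ ((Polynomial.aeval S P : Matrix (Fin p) (Fin p) ℝ) *ᵥ (Hs *ᵥ w)))
        ≤ (Real.sqrt lmin)⁻¹ * eNorm ((Polynomial.aeval S P : Matrix (Fin p) (Fin p) ℝ) *ᵥ (Hs *ᵥ w)) :=
          hdown _
      _ ≤ (Real.sqrt lmin)⁻¹ * (opNorm (Polynomial.aeval S P) * eNorm (Hs *ᵥ w)) := by
          refine mul_le_mul_of_nonneg_left ?_ (inv_nonneg.2 (Real.sqrt_nonneg _))
          exact eNorm_mulVec_le _ _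
      _ ≤ (Real.sqrt lmin)⁻¹ * (opNorm (Polynomial.aeval S P) * (Real.sqrt lmax * eNorm w)) := by
          refine mul_le_mul_of_nonneg_left ?_ (inv_nonneg.2 (Real.sqrt_nonneg _))
          exact mul_le_mul_of_nonneg_left (hup _) (opNorm_nonneg _)
  have hcond : Real.sqrt (condNum hH.isHermitian) = Real.sqrt lmax * (Real.sqrt lmin)⁻¹ := by
    simp only [condNum, ← hlmax, ← hlmin]
    rw [Real.sqrt_div hmaxpos.le, div_eq_mul_inv]
  calc eNorm ((T - 1) *ᵥ ((∑ i : Fin k, cstar i • x i) - xstar))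
      ≤ (Real.sqrt lmin)⁻¹ * (opNorm (Polynomial.aeval S P) * (Real.sqrt lmax * eNorm w)) :=
        le_trans key1 key2
    _ = Real.sqrt (condNum hH.isHermitian) * opNorm (Polynomial.aeval S P) * eNorm w := by
        rw [hcond]; ring
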